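/- Let R = ⊕_{n≥0} R_n be a Noetherian standard N-graded ring (i.e., R is generated as an R_0-algebra by R_1), and let M = ⊕_{n≥0} M_n be a finitely generated N-graded R-module. Then there exists n_0 ≥ 0 such that ann_{R_0}(M_n) = ann_{R_0}(M_{n_0}) for all n ≥ n_0. -/

import Mathlib

open DirectSum

section Aux

variable {R₀ R M : Type*} [CommRing R₀] [CommRing R] [Algebra R₀ R]
    [AddCommGroup M] [Module R M] [Module R₀ M] [IsScalarTower R₀ R M]
    (𝒜 : ℕ → Submodule R₀ R) (ℳ : ℕ → Submodule R₀ M)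
    [GradedAlgebra 𝒜] [DirectSum.Decomposition ℳ] [SetLike.GradedSMul 𝒜 ℳ]

/-- The degree-`t` component as an additive map. -/
noncomputable def projAM (t : ℕ) : M →+ M where
  toFun x := (DirectSum.decompose ℳ x t : M)
  map_zero' := by simp
  map_add' x y := by simp

omit [IsScalarTower R₀ R M] in
lemma projAM_apply (t : ℕ) (x : M) : projAM ℳ t x = (DirectSum.decompose ℳ x t : M) := rfl

omit [IsScalarTower R₀ R M] in
/-- degree-`j+k` component of `r • m` for homogeneous `m` of degree `k`. -/
lemma comp_smul_aux (r : R) {k : ℕ} {m : M} (hm : m ∈ ℳ k) (j : ℕ) :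
    (DirectSum.decompose ℳ (r • m) (j + k) : M) = (DirectSum.decompose 𝒜 r j : R) • m := by
  classical
  rw [← projAM_apply ℳ]
  conv_lhs => rw [← DirectSum.sum_support_decompose 𝒜 r, Finset.sum_smul, map_sum]
  have hterm : ∀ i ∈ (DirectSum.decompose 𝒜 r).support,
      projAM ℳ (j + k) ((DirectSum.decompose 𝒜 r i : R) • m)
        = if i = j then (DirectSum.decompose 𝒜 r j : R) • m else 0 := by
    intro i _
    have hmem : (DirectSum.decompose 𝒜 r i : R) • m ∈ ℳ (i + k) :=
      SetLike.GradedSMul.smul_mem (A := 𝒜) (B := ℳ)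
        (SetLike.coe_mem (DirectSum.decompose 𝒜 r i)) hm
    by_cases hij : i = j
    · subst hij
      rw [if_pos rfl]
      exact DirectSum.decompose_of_mem_same ℳ hmem
    · rw [if_neg hij]
      exact DirectSum.decompose_of_mem_ne ℳ hmem (fun h => hij (by omega))
  rw [Finset.sum_congr rfl hterm, Finset.sum_ite_eq']
  split_ifs with h
  · rfl
  · rw [DFinsupp.notMem_support_iff.mp h]
    simp

end Aux





/-- Let `R = ⊕_{n≥0} R_n` be a Noetherian standard `ℕ`-graded ring (i.e. `R`
is generated as an `R₀`-algebra in degree one) and `M = ⊕_{n≥0} M_n` a finitely generated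
graded `R`-module.  Then the annihilators `ann_{R₀}(M_n)` stabilize: there is `n₀` with
`ann_{R₀}(M_n) = ann_{R₀}(M_{n₀})` for all `n ≥ n₀`. -/
theorem annihilator_stabilizes_of_graded
    {R₀ R M : Type*} [CommRing R₀] [CommRing R] [Algebra R₀ R]
    [AddCommGroup M] [Module R M] [Module R₀ M] [IsScalarTower R₀ R M]
    (𝒜 : ℕ → Submodule R₀ R) (ℳ : ℕ → Submodule R₀ M)
    [GradedAlgebra 𝒜] [DirectSum.Decomposition ℳ] [SetLike.GradedSMul 𝒜 ℳ]
    (hzero : 𝒜 0 = (1 : Submodule R₀ R))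
    (hstd : ∀ n : ℕ, 𝒜 (n + 1) = 𝒜 1 * 𝒜 n)
    [IsNoetherianRing R] [Module.Finite R M] :
    ∃ n₀ : ℕ, ∀ n ≥ n₀,
      Module.annihilator R₀ (ℳ n) = Module.annihilator R₀ (ℳ n₀) := by
  classical
  -- membership characterization of the annihilator of a graded piece
  have mem_ann : ∀ (n : ℕ) (a : R₀),
      a ∈ Module.annihilator R₀ (ℳ n) ↔ ∀ w ∈ ℳ n, a • w = 0 := by
    intro n a
    rw [Module.mem_annihilator]
    constructor
    · intro h w hw
      exact congrArg Subtype.val (h ⟨w, hw⟩)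
    · intro h m
      exact Subtype.ext (h m.1 m.2)
  -- commuting scalars
  have comm : ∀ (a : R₀) (p : R) (z : M), a • p • z = p • a • z := by
    intro a p z
    rw [algebra_compatible_smul R a (p • z), smul_smul, mul_comm, ← smul_smul,
      ← algebra_compatible_smul]
  -- get a finite generating set
  obtain ⟨s, hs⟩ := (Module.Finite.fg_top : (⊤ : Submodule R M).FG)
  set d := s.sup (fun m => (DirectSum.decompose ℳ m).support.sup id) with hd
  -- key step: annihilators increase from degree `d` on
  have step : ∀ n, d ≤ n →
      Module.annihilator R₀ (ℳ n) ≤ Module.annihilator R₀ (ℳ (n + 1)) := by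
    intro n hdn a ha
    have hann : ∀ w ∈ ℳ n, a • w = 0 := (mem_ann n a).mp ha
    rw [mem_ann]
    intro x hx
    -- inner claim: a kills the (n+1)-component of r • w for homogeneous w of degree k ≤ n
    have inner : ∀ (r : R) (k : ℕ), k ≤ n → ∀ w ∈ ℳ k,
        a • (DirectSum.decompose ℳ (r • w) (n + 1) : M) = 0 := by
      intro r k hk w hw
      have e : n + 1 = (n + 1 - k) + k := by omega
      rw [show (DirectSum.decompose ℳ (r • w) (n + 1) : M)
            = (DirectSum.decompose ℳ (r • w) ((n + 1 - k) + k) : M) from by rw [← e],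
        comp_smul_aux 𝒜 ℳ r hw (n + 1 - k)]
      have hu : (DirectSum.decompose 𝒜 r (n + 1 - k) : R) ∈ 𝒜 1 * 𝒜 (n - k) := by
        set u : R := (DirectSum.decompose 𝒜 r (n + 1 - k) : R) with hu'
        have h0 : u ∈ 𝒜 (n + 1 - k) := SetLike.coe_mem _
        rwa [show n + 1 - k = (n - k) + 1 from by omega, hstd] at h0
      refine Submodule.mul_induction_on hu ?_ ?_
      · intro p hp q hq
        have hqw : q • w ∈ ℳ n := by
          have h1 := SetLike.GradedSMul.smul_mem (A := 𝒜) (B := ℳ) hq hw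
          have h2 : (n - k) + k = n := by omega
          exact h2 ▸ h1
        rw [mul_smul, comm a p (q • w), hann _ hqw, smul_zero]
      · intro p q hp hq
        rw [add_smul, smul_add, hp, hq, add_zero]
    -- outer: decompose x along the generators
    obtain ⟨c, hsupp, hsum⟩ := Submodule.mem_span_set.mp
      (show x ∈ Submodule.span R (↑s : Set M) by rw [hs]; trivial)
    have hx1 : x = (DirectSum.decompose ℳ x (n + 1) : M) :=
      (DirectSum.decompose_of_mem_same ℳ hx).symm
    rw [hx1, ← hsum, ← projAM_apply ℳ, Finsupp.sum, map_sum, Finset.smul_sum]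
    refine Finset.sum_eq_zero fun g hg => ?_
    have hgd : ∀ k ∈ (DirectSum.decompose ℳ g).support, k ≤ n := by
      intro k hk
      have h1 : k ≤ (DirectSum.decompose ℳ g).support.sup id := Finset.le_sup (f := id) hk
      have h2 : (DirectSum.decompose ℳ g).support.sup id ≤ d :=
        Finset.le_sup (f := fun m => (DirectSum.decompose ℳ m).support.sup id) (hsupp hg)
      omega
    obtain ⟨r0, hr0⟩ : ∃ r0, c g = r0 := ⟨_, rfl⟩
    rw [hr0]
    conv_lhs => rw [← DirectSum.sum_support_decompose ℳ g, Finset.smul_sum, map_sum,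
      Finset.smul_sum]
    refine Finset.sum_eq_zero fun k hk => ?_
    rw [projAM_apply ℳ]
    exact inner r0 k (hgd k hk) _ (SetLike.coe_mem _)
  -- monotonicity beyond degree d
  have hmono : ∀ m k, d ≤ m → m ≤ k →
      Module.annihilator R₀ (ℳ m) ≤ Module.annihilator R₀ (ℳ k) := by
    intro m k hdm hmk
    induction k, hmk using Nat.le_induction with
    | base => exact le_rfl
    | succ k hmk ih => exact ih.trans (step k (by omega))
  -- ideals in R generated by the annihilators
  have fmono : Monotone (fun i : ℕ =>
      Ideal.span ((algebraMap R₀ R) '' (Module.annihilator R₀ (ℳ (d + i)) : Set R₀))) := by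
    apply monotone_nat_of_le_succ
    intro i
    apply Ideal.span_mono
    apply Set.image_mono
    have : Module.annihilator R₀ (ℳ (d + i)) ≤ Module.annihilator R₀ (ℳ (d + i + 1)) :=
      step (d + i) (by omega)
    intro y hy
    have := this hy
    rw [show d + (i + 1) = d + i + 1 from by omega]; exact this
  set f : ℕ →o Ideal R :=
    ⟨fun i => Ideal.span ((algebraMap R₀ R) '' (Module.annihilator R₀ (ℳ (d + i)) : Set R₀)),
      fmono⟩ with hf
  obtain ⟨N, hN⟩ := monotone_stabilizes_iff_noetherian.mpr
    (inferInstance : IsNoetherian R R) f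
  -- elements of the span kill the corresponding graded piece
  have kill : ∀ (n : ℕ) (r : R),
      r ∈ Ideal.span ((algebraMap R₀ R) '' (Module.annihilator R₀ (ℳ n) : Set R₀)) →
      ∀ w ∈ ℳ n, r • w = 0 := by
    intro n r hr w hw
    induction hr using Submodule.span_induction with
    | mem y hy =>
      obtain ⟨b, hb, rfl⟩ := hy
      rw [← algebra_compatible_smul]
      exact (mem_ann n b).mp hb w hw
    | zero => rw [zero_smul]
    | add p q hp hq ihp ihq => rw [add_smul, ihp, ihq, add_zero]
    | smul p q hq ihq => rw [smul_eq_mul, mul_smul, ihq, smul_zero]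
  refine ⟨d + N, fun n hn => ?_⟩
  apply le_antisymm
  · intro a ha
    have e : d + (n - d) = n := by omega
    have h1 : algebraMap R₀ R a ∈ f (n - d) := by
      apply Ideal.subset_span
      exact ⟨a, by rw [e]; exact ha, rfl⟩
    have h2 : f (n - d) = f N := (hN (n - d) (by omega)).symm
    rw [h2] at h1
    rw [mem_ann]
    intro w hw
    rw [algebra_compatible_smul R a w]
    exact kill (d + N) _ h1 w hw
  · exact hmono (d + N) n (by omega) hn
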